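/- For each n ∈ ℕ, n ≥ 1, define f_n : (0,1) → [0,1] piecewise by: for k ∈ ℕ odd and x ∈ ((k−1)/(n+k−1), k/(n+k)), f_n(x) = (x(n+k−1) − k + 1)·(n+k)/n, and for k ∈ ℕ even and x ∈ [(k−1)/(n+k−1), k/(n+k)), f_n(x) = (k − x(n+k))·(n+k−1)/n. Then for every n, the pushforward of Lebesgue measure on (0,1) under f_n equals Lebesgue measure on [0,1]; i.e. for every Borel set A ⊆ [0,1], Leb{x ∈ (0,1) : f_n(x) ∈ A} = Leb(A). -/
import Mathlib

open MeasureTheory Filter Topology Set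

lemma aux_vol_affine (c d : ℝ) (hc : c ≠ 0) (S : Set ℝ) :
    volume ((fun x => c * x + d) ⁻¹' S) = ENNReal.ofReal |c|⁻¹ * volume S := by
  have h1 : (fun x : ℝ => c * x + d) ⁻¹' S
      = (c * ·) ⁻¹' ((fun y : ℝ => y + d) ⁻¹' S) := rfl
  rw [h1, Real.volume_preimage_mul_left hc, measure_preimage_add_right, abs_inv]

lemma aux_volA (A : Set ℝ) (hA' : A ⊆ Set.Icc (0:ℝ) 1) :
    volume (A ∩ Set.Ioo (0:ℝ) 1) = volume A := by
  refine le_antisymm (measure_mono inter_subset_left) ?_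
  have hsub : A ⊆ (A ∩ Set.Ioo (0:ℝ) 1) ∪ {0, 1} := by
    intro x hx
    rcases eq_or_ne x 0 with h | h0
    · exact Or.inr (by simp [h])
    rcases eq_or_ne x 1 with h | h1
    · exact Or.inr (by simp [h])
    · have := hA' hx
      exact Or.inl ⟨hx, lt_of_le_of_ne this.1 (Ne.symm h0), lt_of_le_of_ne this.2 h1⟩
  calc volume A ≤ volume ((A ∩ Set.Ioo (0:ℝ) 1) ∪ ({0, 1} : Set ℝ)) := measure_mono hsub
    _ ≤ volume (A ∩ Set.Ioo (0:ℝ) 1) + volume ({0, 1} : Set ℝ) := measure_union_le _ _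
    _ = volume (A ∩ Set.Ioo (0:ℝ) 1) := by
        have h01 : volume ({0, 1} : Set ℝ) = 0 :=
          Set.Countable.measure_zero
            ((Set.Finite.insert _ (Set.finite_singleton _)).countable) _
        rw [h01, add_zero]

lemma aux_slice (f : ℝ → ℝ) (A : Set ℝ) (hA' : A ⊆ Set.Icc (0:ℝ) 1)
    (p q c d : ℝ) (hc : c ≠ 0)
    (hiff : ∀ x, x ∈ Set.Ioo p q ↔ c * x + d ∈ Set.Ioo (0:ℝ) 1)
    (hfx : ∀ x ∈ Set.Ioo p q, f x = c * x + d)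
    (hlen : |c|⁻¹ = q - p) :
    volume (f ⁻¹' A ∩ Set.Ioo p q) = ENNReal.ofReal (q - p) * volume A := by
  have hset : f ⁻¹' A ∩ Set.Ioo p q = (fun x => c * x + d) ⁻¹' (A ∩ Set.Ioo 0 1) := by
    ext x
    constructor
    · rintro ⟨hxA, hx⟩
      refine ⟨?_, (hiff x).mp hx⟩
      show c * x + d ∈ A
      rw [← hfx x hx]; exact hxA
    · rintro ⟨h1, h2⟩
      have hx := (hiff x).mpr h2
      refine ⟨?_, hx⟩
      show f x ∈ A
      rw [hfx x hx]; exact h1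
  rw [hset, aux_vol_affine c d hc, hlen, aux_volA A hA']

lemma aux_iff_pos (p q c d : ℝ) (hc : 0 < c) (h0 : c * p + d = 0) (h1 : c * q + d = 1) :
    ∀ x, x ∈ Set.Ioo p q ↔ c * x + d ∈ Set.Ioo (0:ℝ) 1 := by
  intro x
  simp only [Set.mem_Ioo]
  constructor
  · rintro ⟨ha, hb⟩; constructor <;> nlinarith
  · rintro ⟨ha, hb⟩; constructor <;> nlinarith

lemma aux_iff_neg (p q c d : ℝ) (hc : c < 0) (h0 : c * p + d = 1) (h1 : c * q + d = 0) :
    ∀ x, x ∈ Set.Ioo p q ↔ c * x + d ∈ Set.Ioo (0:ℝ) 1 := by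
  intro x
  simp only [Set.mem_Ioo]
  constructor
  · rintro ⟨ha, hb⟩; constructor <;> nlinarith
  · rintro ⟨ha, hb⟩; constructor <;> nlinarith

/-- For the sequence of nonperiodic m-oscillating functions `fₙ` given piecewise by
`fₙ(x) = (x(n+k-1) - k + 1)·(n+k)/n` on `((k-1)/(n+k-1), k/(n+k))` for `k` odd and
`fₙ(x) = (k - x(n+k))·(n+k-1)/n` on `[(k-1)/(n+k-1), k/(n+k))` for `k` even, the Young
measure associated with each `fₙ` (the pushforward of Lebesgue measure on `(0,1)` under
`fₙ`) is the Lebesgue (uniform) measure on `[0,1]`: for every Borel set `A ⊆ [0,1]`,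
`Leb{x ∈ (0,1) : fₙ(x) ∈ A} = Leb(A)`. -/
theorem youngMeasure_roubicek_example (n : ℕ) (hn : 1 ≤ n) (f : ℝ → ℝ) (hf : Measurable f)
    (hodd : ∀ k : ℕ, 1 ≤ k → Odd k → ∀ x : ℝ,
      x ∈ Set.Ioo (((k:ℝ) - 1) / ((n:ℝ) + k - 1)) ((k:ℝ) / ((n:ℝ) + k)) →
      f x = (x * ((n:ℝ) + k - 1) - k + 1) * ((n:ℝ) + k) / n)
    (heven : ∀ k : ℕ, 1 ≤ k → Even k → ∀ x : ℝ,
      x ∈ Set.Ico (((k:ℝ) - 1) / ((n:ℝ) + k - 1)) ((k:ℝ) / ((n:ℝ) + k)) →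
      f x = ((k:ℝ) - x * ((n:ℝ) + k)) * ((n:ℝ) + k - 1) / n)
    (A : Set ℝ) (hA : MeasurableSet A) (hA' : A ⊆ Set.Icc (0:ℝ) 1) :
    Measure.map f (volume.restrict (Set.Ioo (0:ℝ) 1)) A = volume A := by
  classical
  have hN : (1:ℝ) ≤ (n:ℝ) := by exact_mod_cast hn
  have hN0 : (0:ℝ) < (n:ℝ) := by linarith
  set b : ℕ → ℝ := fun k => (k:ℝ) / ((n:ℝ) + k) with hbdef
  have hbk : ∀ k : ℕ, b k = (k:ℝ) / ((n:ℝ) + k) := fun k => rfl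
  have hden : ∀ k : ℕ, (0:ℝ) < (n:ℝ) + k := by
    intro k; positivity
  have hb0 : b 0 = 0 := by simp [hbdef]
  have hbmono : StrictMono b := by
    apply strictMono_nat_of_lt_succ
    intro k
    have h1 : (0:ℝ) < (n:ℝ) + k := hden k
    have h2 : (0:ℝ) < (n:ℝ) + ((k:ℝ) + 1) := by positivity
    rw [hbk, hbk]
    push_cast
    rw [div_lt_div_iff₀ h1 h2]
    nlinarith
  have hbnonneg : ∀ k, 0 ≤ b k := by
    intro k; rw [hbk]; positivity
  have hblt1 : ∀ k, b k < 1 := by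
    intro k; rw [hbk, div_lt_one (hden k)]; linarith
  -- the per-interval computation
  have key : ∀ k : ℕ, volume (f ⁻¹' A ∩ Set.Ioo (b k) (b (k+1)))
      = ENNReal.ofReal (b (k+1) - b k) * volume A := by
    intro k
    have hNk : (0:ℝ) < (n:ℝ) + k := hden k
    have hNk1 : (0:ℝ) < (n:ℝ) + k + 1 := by linarith
    have hbsucc : b (k+1) = ((k:ℝ) + 1) / ((n:ℝ) + k + 1) := by
      rw [hbk]; push_cast; ring_nf
    -- interval from the statement hypotheses for index k+1
    have hIoo : Set.Ioo ((((k+1:ℕ):ℝ) - 1) / ((n:ℝ) + ((k+1:ℕ):ℝ) - 1))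
        (((k+1:ℕ):ℝ) / ((n:ℝ) + ((k+1:ℕ):ℝ)))
        = Set.Ioo (b k) (b (k+1)) := by
      rw [hbk, hbsucc]; push_cast; ring_nf
    rcases Nat.even_or_odd k with hk | hk
    · -- k even, so k+1 odd: increasing piece
      set c : ℝ := ((n:ℝ) + k) * ((n:ℝ) + k + 1) / n with hc
      set d : ℝ := (-(k:ℝ)) * ((n:ℝ) + k + 1) / n with hd
      have hcpos : 0 < c := by rw [hc]; positivity
      have hfx : ∀ x ∈ Set.Ioo (b k) (b (k+1)), f x = c * x + d := by
        intro x hx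
        have hmem : x ∈ Set.Ioo ((((k+1:ℕ):ℝ) - 1) / ((n:ℝ) + ((k+1:ℕ):ℝ) - 1))
            (((k+1:ℕ):ℝ) / ((n:ℝ) + ((k+1:ℕ):ℝ))) := by rw [hIoo]; exact hx
        have := hodd (k+1) (by omega) (Even.add_one hk) x hmem
        rw [this, hc, hd]
        push_cast
        field_simp
        ring
      have h0 : c * b k + d = 0 := by
        rw [hc, hd, hbk]
        field_simp
        ring
      have h1 : c * b (k+1) + d = 1 := by
        rw [hc, hd, hbsucc]
        field_simp
        ring
      have hlen : |c|⁻¹ = b (k+1) - b k := by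
        rw [abs_of_pos hcpos, hc, hbsucc, hbk]
        field_simp
        ring
      exact aux_slice f A hA' (b k) (b (k+1)) c d (ne_of_gt hcpos)
        (aux_iff_pos _ _ _ _ hcpos h0 h1) hfx hlen
    · -- k odd, so k+1 even: decreasing piece
      set c : ℝ := -(((n:ℝ) + k) * ((n:ℝ) + k + 1) / n) with hc
      set d : ℝ := ((k:ℝ) + 1) * ((n:ℝ) + k) / n with hd
      have hcneg : c < 0 := by
        rw [hc]; simp only [neg_neg, neg_lt_zero]; positivity
      have hfx : ∀ x ∈ Set.Ioo (b k) (b (k+1)), f x = c * x + d := by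
        intro x hx
        have hmem : x ∈ Set.Ico ((((k+1:ℕ):ℝ) - 1) / ((n:ℝ) + ((k+1:ℕ):ℝ) - 1))
            (((k+1:ℕ):ℝ) / ((n:ℝ) + ((k+1:ℕ):ℝ))) := by
          refine Set.Ioo_subset_Ico_self ?_
          rw [hIoo]; exact hx
        have := heven (k+1) (by omega) (Odd.add_one hk) x hmem
        rw [this, hc, hd]
        push_cast
        field_simp
        ring
      have h0 : c * b k + d = 1 := by
        rw [hc, hd, hbk]
        field_simp
        ring
      have h1 : c * b (k+1) + d = 0 := by
        rw [hc, hd, hbsucc]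
        field_simp
        ring
      have hlen : |c|⁻¹ = b (k+1) - b k := by
        rw [abs_of_neg hcneg, hc, hbsucc, hbk]
        field_simp
        ring
      exact aux_slice f A hA' (b k) (b (k+1)) c d (ne_of_lt hcneg)
        (aux_iff_neg _ _ _ _ hcneg h0 h1) hfx hlen
  -- union of the intervals covers (0,1) up to a countable set
  set U : Set ℝ := ⋃ k : ℕ, Set.Ioo (b k) (b (k+1)) with hUdef
  have hUsub : U ⊆ Set.Ioo (0:ℝ) 1 := by
    refine Set.iUnion_subset fun k x hx => ?_
    exact ⟨lt_of_le_of_lt (hbnonneg k) hx.1, lt_trans hx.2 (hblt1 (k+1))⟩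
  have hcov : Set.Ioo (0:ℝ) 1 \ U ⊆ Set.range b := by
    rintro x ⟨⟨hx0, hx1⟩, hxU⟩
    by_contra hxr
    obtain ⟨K, hK⟩ := exists_nat_gt ((n:ℝ) * x / (1 - x))
    have hx1' : (0:ℝ) < 1 - x := by linarith
    have hPK : x < b K := by
      rw [hbk, lt_div_iff₀ (hden K)]
      have h2 : (n:ℝ) * x < (K:ℝ) * (1 - x) := by
        have := (div_lt_iff₀ hx1').mp hK
        linarith
      nlinarith
    have hex : ∃ j : ℕ, x < b j := ⟨K, hPK⟩
    have hm := Nat.find_spec hex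
    have hm0 : Nat.find hex ≠ 0 := by
      intro h
      rw [h, hb0] at hm
      linarith
    obtain ⟨j, hj⟩ := Nat.exists_eq_succ_of_ne_zero hm0
    have hjlt : ¬ x < b j := Nat.find_min hex (by omega)
    have hble : b j ≤ x := not_lt.mp hjlt
    have hbne : b j ≠ x := fun h => hxr ⟨j, h⟩
    apply hxU
    refine Set.mem_iUnion.mpr ⟨j, lt_of_le_of_ne hble hbne, ?_⟩
    have hm' := hm
    rw [hj] at hm'
    exact hm'
  have hnullcov : volume (Set.Ioo (0:ℝ) 1 \ U) = 0 :=
    measure_mono_null hcov ((Set.countable_range b).measure_zero _)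
  -- pairwise disjointness
  have hdisj : Pairwise (Function.onFun Disjoint fun k => Set.Ioo (b k) (b (k+1))) := by
    have haux : ∀ i j : ℕ, i < j →
        Disjoint (Set.Ioo (b i) (b (i+1))) (Set.Ioo (b j) (b (j+1))) := by
      intro i j hij
      apply Set.disjoint_left.mpr
      rintro x ⟨_, h2⟩ ⟨h3, _⟩
      have : b (i+1) ≤ b j := hbmono.monotone (by omega)
      linarith
    intro i j hij
    rcases hij.lt_or_gt with h | h
    · exact haux i j h
    · exact (haux j i h).symm
  have hmeasI : ∀ k : ℕ, MeasurableSet (f ⁻¹' A ∩ Set.Ioo (b k) (b (k+1))) :=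
    fun k => (hf hA).inter measurableSet_Ioo
  -- reduce to the union
  rw [Measure.map_apply hf hA, Measure.restrict_apply (hf hA)]
  have hvol_eq : volume (f ⁻¹' A ∩ Set.Ioo (0:ℝ) 1) = volume (f ⁻¹' A ∩ U) := by
    refine le_antisymm ?_ (measure_mono (Set.inter_subset_inter_right _ hUsub))
    calc volume (f ⁻¹' A ∩ Set.Ioo (0:ℝ) 1)
        ≤ volume ((f ⁻¹' A ∩ U) ∪ (Set.Ioo (0:ℝ) 1 \ U)) := by
          apply measure_mono
          rintro x ⟨hx1, hx2⟩
          by_cases hxU : x ∈ U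
          · exact Or.inl ⟨hx1, hxU⟩
          · exact Or.inr ⟨hx2, hxU⟩
      _ ≤ volume (f ⁻¹' A ∩ U) + volume (Set.Ioo (0:ℝ) 1 \ U) := measure_union_le _ _
      _ = volume (f ⁻¹' A ∩ U) := by rw [hnullcov, add_zero]
  have hsum : volume (f ⁻¹' A ∩ U)
      = ∑' k : ℕ, volume (f ⁻¹' A ∩ Set.Ioo (b k) (b (k+1))) := by
    rw [hUdef, Set.inter_iUnion]
    exact measure_iUnion
      (hdisj.mono fun i j h => h.mono Set.inter_subset_right Set.inter_subset_right)
      hmeasI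
  have hUvol : volume U = 1 := by
    have h1 : volume U ≤ 1 := by
      calc volume U ≤ volume (Set.Ioo (0:ℝ) 1) := measure_mono hUsub
        _ = 1 := by simp
    have h2 : (1:ENNReal) ≤ volume U := by
      calc (1:ENNReal) = volume (Set.Ioo (0:ℝ) 1) := by simp
        _ ≤ volume U + volume (Set.Ioo (0:ℝ) 1 \ U) := by
            apply le_trans (measure_mono ?_) (measure_union_le _ _)
            intro x hx
            by_cases hxU : x ∈ U
            · exact Or.inl hxU
            · exact Or.inr ⟨hx, hxU⟩
        _ = volume U := by rw [hnullcov, add_zero]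
    exact le_antisymm h1 h2
  have hone : ∑' k : ℕ, ENNReal.ofReal (b (k+1) - b k) = 1 := by
    have : ∀ k : ℕ, ENNReal.ofReal (b (k+1) - b k)
        = volume (Set.Ioo (b k) (b (k+1))) := by
      intro k; rw [Real.volume_Ioo]
    calc ∑' k : ℕ, ENNReal.ofReal (b (k+1) - b k)
        = ∑' k : ℕ, volume (Set.Ioo (b k) (b (k+1))) := by
          exact tsum_congr this
      _ = volume U := (measure_iUnion hdisj fun k => measurableSet_Ioo).symm
      _ = 1 := hUvol
  rw [hvol_eq, hsum]
  simp_rw [key]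
  rw [ENNReal.tsum_mul_right, hone, one_mul]
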